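/- Let η : ℝ → ℝ be strictly convex on the closed interval [φ_m, φ_M], where φ_m < φ_M are real numbers, and let λ be a real number with 1/2 < λ < 1. Then there do not exist φ₁, φ₂ ∈ [φ_m, φ_M] such that φ₁ + φ₂ = 2(λ·φ_m + (1−λ)·φ_M) and η(φ₁) + η(φ₂) = 2(λ·η(φ_m) + (1−λ)·η(φ_M)). -/

import Mathlib

/-- Core of Theorem 2.1: no two points of the strictly convex curve section
`{(φ, η φ) : φ ∈ [φ_m, φ_M]}` can have the prescribed average
`λ·(φ_m, η φ_m) + (1−λ)·(φ_M, η φ_M)` with `λ ∈ (1/2, 1)`. -/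
theorem stmt_0 (η : ℝ → ℝ) (φm φM : ℝ) (hlt : φm < φM)
    (hconv : StrictConvexOn ℝ (Set.Icc φm φM) η)
    (lam : ℝ) (hlam1 : 1 / 2 < lam) (hlam2 : lam < 1) :
    ¬ ∃ φ₁ φ₂ : ℝ, φ₁ ∈ Set.Icc φm φM ∧ φ₂ ∈ Set.Icc φm φM ∧
      φ₁ + φ₂ = 2 * (lam * φm + (1 - lam) * φM) ∧
      η φ₁ + η φ₂ = 2 * (lam * η φm + (1 - lam) * η φM) := by
  rintro ⟨φ₁, φ₂, h₁, h₂, hs, hη⟩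
  have hd : (0:ℝ) < φM - φm := by linarith
  -- chord inequality
  have chordle : ∀ x ∈ Set.Icc φm φM,
      η x ≤ ((φM - x)/(φM - φm)) * η φm + ((x - φm)/(φM - φm)) * η φM := by
    intro x hx
    have ha : 0 ≤ (φM - x)/(φM - φm) := div_nonneg (by linarith [hx.2]) hd.le
    have hb : 0 ≤ (x - φm)/(φM - φm) := div_nonneg (by linarith [hx.1]) hd.le
    have hab : (φM - x)/(φM - φm) + (x - φm)/(φM - φm) = 1 := by field_simp; ring
    have h := hconv.convexOn.2 (Set.left_mem_Icc.mpr hlt.le)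
      (Set.right_mem_Icc.mpr hlt.le) ha hb hab
    have hx' : ((φM - x)/(φM - φm)) • φm + ((x - φm)/(φM - φm)) • φM = x := by
      simp only [smul_eq_mul]; field_simp; ring
    rw [hx'] at h
    simpa [smul_eq_mul] using h
  have chordlt : ∀ x ∈ Set.Icc φm φM, x ≠ φm → x ≠ φM →
      η x < ((φM - x)/(φM - φm)) * η φm + ((x - φm)/(φM - φm)) * η φM := by
    intro x hx hxm hxM
    have hxm' : φm < x := lt_of_le_of_ne hx.1 (Ne.symm hxm)
    have hxM' : x < φM := lt_of_le_of_ne hx.2 hxM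
    have ha : 0 < (φM - x)/(φM - φm) := div_pos (by linarith) hd
    have hb : 0 < (x - φm)/(φM - φm) := div_pos (by linarith) hd
    have hab : (φM - x)/(φM - φm) + (x - φm)/(φM - φm) = 1 := by field_simp; ring
    have h := hconv.2 (Set.left_mem_Icc.mpr hlt.le)
      (Set.right_mem_Icc.mpr hlt.le) hlt.ne ha hb hab
    have hx' : ((φM - x)/(φM - φm)) • φm + ((x - φm)/(φM - φm)) • φM = x := by
      simp only [smul_eq_mul]; field_simp; ring
    rw [hx'] at h
    simpa [smul_eq_mul] using h
  -- sum of chord values equals the prescribed sum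
  have hcs : (((φM - φ₁)/(φM - φm)) * η φm + ((φ₁ - φm)/(φM - φm)) * η φM)
      + (((φM - φ₂)/(φM - φm)) * η φm + ((φ₂ - φm)/(φM - φm)) * η φM)
      = 2 * (lam * η φm + (1 - lam) * η φM) := by
    field_simp
    linear_combination (η φM - η φm) * hs
  have s1 := chordle φ₁ h₁
  have s2 := chordle φ₂ h₂
  -- each φᵢ must be an endpoint
  have end1 : φ₁ = φm ∨ φ₁ = φM := by
    by_contra hc
    push_neg at hc
    have := chordlt φ₁ h₁ hc.1 hc.2
    linarith
  have end2 : φ₂ = φm ∨ φ₂ = φM := by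
    by_contra hc
    push_neg at hc
    have := chordlt φ₂ h₂ hc.1 hc.2
    linarith
  have hp1 : (0:ℝ) < (1 - lam) * (φM - φm) := mul_pos (by linarith) hd
  have hp2 : (0:ℝ) < (2 * lam - 1) * (φM - φm) := mul_pos (by linarith) hd
  have hp3 : (0:ℝ) < lam * (φM - φm) := mul_pos (by linarith) hd
  rcases end1 with rfl | rfl <;> rcases end2 with h2e | h2e <;>
    rw [h2e] at hs <;> nlinarith
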